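/- Let B ⊂ A be an inclusion of simple unital C*-algebras with a conditional expectation of index-finite type. Then (B'∩A_2) e_2 = (B'∩A_1) e_2 and (B'∩A_2) e_1 = (A'∩A_2) e_1. -/

import Mathlib

open scoped TensorProduct

noncomputable section

/-- A unital C*-algebra is *simple* if it has no nontrivial closed two-sided ideals. -/
def IsSimpleCStarAlgebra (A : Type*) [Ring A] [TopologicalSpace A] : Prop :=
  ∀ I : TwoSidedIdeal A, IsClosed (I : Set A) → I = ⊥ ∨ I = ⊤

/-- A conditional expectation from the subalgebra `A` of the ambient algebra `C`
onto its subalgebra `B`, recorded as a linear map on `C`. -/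
structure CondExpOn (C : Type*) [CStarAlgebra C] (A B : StarSubalgebra ℂ C) where
  map : C →ₗ[ℂ] C
  mem_of_mem : ∀ x ∈ A, map x ∈ B
  fixes : ∀ x ∈ B, map x = x
  bimodule : ∀ b ∈ B, ∀ b' ∈ B, ∀ x ∈ A, map (b * x * b') = b * map x * b'
  star_map : ∀ x ∈ A, map (star x) = star (map x)
  positive : ∀ x ∈ A, ∃ y ∈ B, map (star x * x) = star y * y

/-- A (Watatani) quasi-basis for an expectation-like map `E` on the set `S`:
`∑ᵢ uᵢ E(uᵢ* y) = y = ∑ᵢ E(y uᵢ) uᵢ*` for all `y ∈ S`.  The existence of a quasi-basis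
is the statement that the corresponding conditional expectation is of index-finite type. -/
structure IsQuasiBasisOn {C : Type*} [CStarAlgebra C] (E : C →ₗ[ℂ] C) (S : Set C)
    {n : ℕ} (u : Fin n → C) : Prop where
  mem : ∀ i, u i ∈ S
  left : ∀ y ∈ S, ∑ i, u i * E (star (u i) * y) = y
  right : ∀ y ∈ S, ∑ i, E (y * u i) * star (u i) = y

/-- The relative commutant `M' ∩ N` inside the ambient algebra `C`. -/
def relativeCommutant {C : Type*} [CStarAlgebra C] (M N : StarSubalgebra ℂ C) :
    Submodule ℂ C where
  carrier := {x | x ∈ N ∧ ∀ m ∈ M, m * x = x * m}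
  add_mem' := fun hx hy => ⟨add_mem hx.1 hy.1,
    fun m hm => by rw [mul_add, add_mul, hx.2 m hm, hy.2 m hm]⟩
  zero_mem' := ⟨zero_mem _, fun m _ => by rw [mul_zero, zero_mul]⟩
  smul_mem' := fun c x hx => ⟨SMulMemClass.smul_mem c hx.1,
    fun m hm => by rw [mul_smul_comm, smul_mul_assoc, hx.2 m hm]⟩

/-- The pairing of two linear functionals against a tensor:
`pairT f g (a ⊗ b) = f a * g b`. -/
def pairT {C : Type*} [CStarAlgebra C] (f g : C →ₗ[ℂ] ℂ) : C ⊗[ℂ] C →ₗ[ℂ] ℂ :=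
  (TensorProduct.lid ℂ ℂ).toLinearMap ∘ₗ TensorProduct.map f g

/-- `(ε ⊗ id)` applied to a tensor. -/
def counitL {C : Type*} [CStarAlgebra C] (ε : C →ₗ[ℂ] ℂ) : C ⊗[ℂ] C →ₗ[ℂ] C :=
  (TensorProduct.lid ℂ C).toLinearMap ∘ₗ TensorProduct.map ε LinearMap.id

/-- `(id ⊗ ε)` applied to a tensor. -/
def counitR {C : Type*} [CStarAlgebra C] (ε : C →ₗ[ℂ] ℂ) : C ⊗[ℂ] C →ₗ[ℂ] C :=
  (TensorProduct.rid ℂ C).toLinearMap ∘ₗ TensorProduct.map LinearMap.id ε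

/-- Sweedler expression `t ↦ ε(t₍₁₎ w) t₍₂₎`; applied to `Δ(1)` this is the
target counital map `ε^t(w) = ε(1₍₁₎ w) 1₍₂₎`. -/
def ctarget {C : Type*} [CStarAlgebra C] (ε : C →ₗ[ℂ] ℂ) (w : C) : C ⊗[ℂ] C →ₗ[ℂ] C :=
  (TensorProduct.lid ℂ C).toLinearMap ∘ₗ
    TensorProduct.map (ε ∘ₗ LinearMap.mulRight ℂ w) LinearMap.id

/-- Sweedler expression `t ↦ t₍₁₎ ε(w t₍₂₎)`; applied to `Δ(1)` this is the
source counital map `ε^s(w) = 1₍₁₎ ε(w 1₍₂₎)`. -/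
def csource {C : Type*} [CStarAlgebra C] (ε : C →ₗ[ℂ] ℂ) (w : C) : C ⊗[ℂ] C →ₗ[ℂ] C :=
  (TensorProduct.rid ℂ C).toLinearMap ∘ₗ
    TensorProduct.map LinearMap.id (ε ∘ₗ LinearMap.mulLeft ℂ w)

/-- The tower `B ⊆ A ⊆ A₁ ⊆ A₂` of iterated C*-basic constructions associated to an
inclusion `B ⊆ A` of simple unital C*-algebras (all realized inside an ambient unital
C*-algebra `C`), together with:  the minimal conditional expectations `E₀ : A → B`,
`E₁ : A₁ → A`, `E₂ : A₂ → A₁`, all of index-finite type;  a quasi-basis `lam` for `E₀`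
with scalar index `τ⁻¹` (minimal, i.e. of smallest index);  the Jones projections
`e₁, e₂`;  the Markov-type trace `tr` given on `B' ∩ A₂` by `E₀ ∘ E₁ ∘ E₂`;  and a
quasi-basis `u` for the restriction of `E₁` to the relative commutant `A' ∩ A₁`, whose
Watatani index `k = ∑ uᵢuᵢ*` is invertible with inverse `kinv`. -/
structure JonesTower (C : Type*) [CStarAlgebra C] where
  B : StarSubalgebra ℂ C
  A : StarSubalgebra ℂ C
  A1 : StarSubalgebra ℂ C
  A2 : StarSubalgebra ℂ C
  hBA : B ≤ A
  hAA1 : A ≤ A1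
  hA1A2 : A1 ≤ A2
  simpleB : IsSimpleCStarAlgebra B
  simpleA : IsSimpleCStarAlgebra A
  E0 : CondExpOn C A B
  E1 : CondExpOn C A1 A
  E2 : CondExpOn C A2 A1
  τ : ℝ
  τ_pos : 0 < τ
  nl : ℕ
  lam : Fin nl → C
  lam_qb : IsQuasiBasisOn E0.map (A : Set C) lam
  qb1 : ∃ (n : ℕ) (v : Fin n → C), IsQuasiBasisOn E1.map (A1 : Set C) v
  qb2 : ∃ (n : ℕ) (v : Fin n → C), IsQuasiBasisOn E2.map (A2 : Set C) v
  lam_index : ∑ i, lam i * star (lam i) = ((τ⁻¹ : ℝ) : ℂ) • 1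
  E0_minimal : ∀ (E' : CondExpOn C A B) (n : ℕ) (v : Fin n → C) (c : ℝ),
      IsQuasiBasisOn E'.map (A : Set C) v →
      (∑ i, v i * star (v i)) = ((c : ℝ) : ℂ) • 1 → τ⁻¹ ≤ c
  e1 : C
  e2 : C
  e1_mem : e1 ∈ A1
  e2_mem : e2 ∈ A2
  e1_star : star e1 = e1
  e2_star : star e2 = e2
  e1_idem : e1 * e1 = e1
  e2_idem : e2 * e2 = e2
  e1_comm : ∀ b ∈ B, e1 * b = b * e1
  e2_comm : ∀ a ∈ A, e2 * a = a * e2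
  e1_jones : ∀ x ∈ A, e1 * x * e1 = E0.map x * e1
  e2_jones : ∀ x ∈ A1, e2 * x * e2 = E1.map x * e2
  E1_e1 : E1.map e1 = ((τ : ℝ) : ℂ) • 1
  E2_e2 : E2.map e2 = ((τ : ℝ) : ℂ) • 1
  gen1 : A1 = (StarAlgebra.adjoin ℂ ((A : Set C) ∪ {e1})).topologicalClosure
  gen2 : A2 = (StarAlgebra.adjoin ℂ ((A1 : Set C) ∪ {e2})).topologicalClosure
  tr : C →ₗ[ℂ] ℂ
  tr_def : ∀ x ∈ A2, (∀ b ∈ B, b * x = x * b) →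
      E0.map (E1.map (E2.map x)) = tr x • 1
  nu : ℕ
  u : Fin nu → C
  u_qb : IsQuasiBasisOn E1.map {x | x ∈ A1 ∧ ∀ a ∈ A, a * x = x * a} u
  kinv : C
  kinv_k : kinv * (∑ i, u i * star (u i)) = 1
  k_kinv : (∑ i, u i * star (u i)) * kinv = 1

namespace JonesTower

variable {C : Type*} [CStarAlgebra C] (T : JonesTower C)

/-- The relative commutant `P = B' ∩ A₁`. -/
def P : Submodule ℂ C := relativeCommutant T.B T.A1

/-- The relative commutant `Q = A' ∩ A₂`. -/
def Q : Submodule ℂ C := relativeCommutant T.A T.A2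

/-- `k = Ind_W (E₁|_{A' ∩ A₁}) = ∑ᵢ uᵢ uᵢ*`, the Watatani index of the restriction of
`E₁` to `A' ∩ A₁`. -/
def k : C := ∑ i, T.u i * star (T.u i)

/-- `d = ‖k‖₂ = tr(k* k)^{1/2}`. -/
def d : ℝ := Real.sqrt (T.tr (star T.k * T.k)).re

/-- The Nikshych–Vainerman pairing `⟨x, w⟩ = d τ⁻² tr(x e₂ e₁ w)`. -/
def pairNV (x w : C) : ℂ :=
  (T.d : ℂ) * ((T.τ : ℂ)⁻¹) ^ 2 * T.tr (x * T.e2 * T.e1 * w)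

/-- The NV pairing as a linear functional in its second variable. -/
def pairL (x : C) : C →ₗ[ℂ] ℂ :=
  ((T.d : ℂ) * ((T.τ : ℂ)⁻¹) ^ 2) • (T.tr ∘ₗ LinearMap.mulLeft ℂ (x * T.e2 * T.e1))

/-- The NV pairing as a linear functional in its first variable. -/
def pairR (w : C) : C →ₗ[ℂ] ℂ :=
  ((T.d : ℂ) * ((T.τ : ℂ)⁻¹) ^ 2) • (T.tr ∘ₗ LinearMap.mulRight ℂ (T.e2 * (T.e1 * w)))

/-- The subspace `Q ⊗ Q` of `C ⊗ C`. -/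
def QQ : Submodule ℂ (C ⊗[ℂ] C) :=
  Submodule.span ℂ {t | ∃ a ∈ T.Q, ∃ b ∈ T.Q, t = a ⊗ₜ[ℂ] b}

/-- The subspace `P ⊗ P` of `C ⊗ C`. -/
def PP : Submodule ℂ (C ⊗[ℂ] C) :=
  Submodule.span ℂ {t | ∃ a ∈ T.P, ∃ b ∈ T.P, t = a ⊗ₜ[ℂ] b}

/-- The reflection operator `r⁻₁(w) = τ⁻² ∑ᵢ λᵢ e₁ e₂ E₂(w e₁ e₂ λᵢ*)`. -/
def rminus (w : C) : C :=
  (((T.τ : ℂ)⁻¹) ^ 2) •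
    ∑ i, T.lam i * T.e1 * T.e2 * T.E2.map (w * T.e1 * T.e2 * star (T.lam i))

/-- The reflection operator `r⁺₁(x) = τ⁻¹ ∑ᵢ E₁(e₁ λᵢ x) e₁ λᵢ*`. -/
def rplus (x : C) : C :=
  ((T.τ : ℂ)⁻¹) • ∑ i, T.E1.map (T.e1 * T.lam i * x) * T.e1 * star (T.lam i)

/-- The inclusion `B ⊆ A` has depth 2: `(B' ∩ A₁) e₂ (B' ∩ A₁) = B' ∩ A₂`
(as linear spans). -/
def DepthTwo : Prop :=
  Submodule.span ℂ {z | ∃ x ∈ T.P, ∃ y ∈ T.P, z = x * T.e2 * y} =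
    relativeCommutant T.B T.A2

/-- The comultiplication, counit and antipode on `Q = A' ∩ A₂` determined by the
Nikshych–Vainerman pairing:  `⟨x₁x₂, w⟩ = ⟨x₁, w₍₁₎⟩⟨x₂, w₍₂₎⟩`,  `ε(w) = ⟨1, w⟩`, and
`⟨x, S(w)⟩ = conj ⟨x*, w*⟩`. -/
structure NVData where
  Δ : C →ₗ[ℂ] C ⊗[ℂ] C
  ε : C →ₗ[ℂ] ℂ
  S : C →ₗ[ℂ] C
  Δ_mem : ∀ w ∈ T.Q, Δ w ∈ T.QQ
  S_mem : ∀ w ∈ T.Q, S w ∈ T.Q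
  Δ_pair : ∀ x₁ ∈ T.P, ∀ x₂ ∈ T.P, ∀ w ∈ T.Q,
      T.pairNV (x₁ * x₂) w = pairT (T.pairL x₁) (T.pairL x₂) (Δ w)
  ε_pair : ∀ w ∈ T.Q, ε w = T.pairNV 1 w
  S_pair : ∀ x ∈ T.P, ∀ w ∈ T.Q,
      T.pairNV x (S w) = starRingEnd ℂ (T.pairNV (star x) (star w))

variable {T}

/-- The deformed comultiplication `Δ̃(w) = d (1 ⊗ k⁻¹) Δ(w)`. -/
def tΔ (D : T.NVData) : C →ₗ[ℂ] C ⊗[ℂ] C :=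
  (T.d : ℂ) • ((LinearMap.mulLeft ℂ ((1 : C) ⊗ₜ[ℂ] T.kinv)) ∘ₗ D.Δ)

/-- The deformed counit `ε̃(w) = d⁻¹ ε(k w)`. -/
def tε (D : T.NVData) : C →ₗ[ℂ] ℂ :=
  ((T.d : ℂ))⁻¹ • (D.ε ∘ₗ LinearMap.mulLeft ℂ T.k)

/-- The deformed antipode `S̃(w) = S(k w k⁻¹)`. -/
def tS (D : T.NVData) : C →ₗ[ℂ] C :=
  D.S ∘ₗ (LinearMap.mulRight ℂ T.kinv ∘ₗ LinearMap.mulLeft ℂ T.k)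

end JonesTower

/-- `(Q, Δ, ε, S)` is a weak C*-Hopf algebra, where `Q` is a (necessarily
finite-dimensional) subspace of the ambient C*-algebra `C`, `dag` is the involution of
`Q` and `dagT` is the induced componentwise involution of `Q ⊗ Q`.  This records:
`Q` is a unital algebra, `dag` is an (isometrically positive-definite, i.e. C*-)
involution, `Δ` is a `dag`-preserving algebra map, `(Q, Δ, ε)` is a coalgebra,
the weak bialgebra axioms for `ε` and `Δ(1)`, and the antipode axioms for `S`. -/
structure IsWeakCStarHopfOn {C : Type*} [CStarAlgebra C]
    (Qc : Submodule ℂ C) (QQc : Submodule ℂ (C ⊗[ℂ] C))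
    (dag : C →ₛₗ[starRingEnd ℂ] C) (dagT : C ⊗[ℂ] C → C ⊗[ℂ] C)
    (Δ : C →ₗ[ℂ] C ⊗[ℂ] C) (ε : C →ₗ[ℂ] ℂ) (S : C →ₗ[ℂ] C) : Prop where
  one_mem : (1 : C) ∈ Qc
  mul_mem : ∀ w ∈ Qc, ∀ w' ∈ Qc, w * w' ∈ Qc
  findim : FiniteDimensional ℂ Qc
  dag_mem : ∀ w ∈ Qc, dag w ∈ Qc
  dag_invol : ∀ w ∈ Qc, dag (dag w) = w
  dag_mul : ∀ w ∈ Qc, ∀ w' ∈ Qc, dag (w * w') = dag w' * dag w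
  dag_cstar : ∀ w ∈ Qc, dag w * w = 0 → w = 0
  Δ_mem : ∀ w ∈ Qc, Δ w ∈ QQc
  S_mem : ∀ w ∈ Qc, S w ∈ Qc
  Δ_mul : ∀ w ∈ Qc, ∀ w' ∈ Qc, Δ (w * w') = Δ w * Δ w'
  Δ_star : ∀ w ∈ Qc, Δ (dag w) = dagT (Δ w)
  coassoc : ∀ w ∈ Qc,
      (TensorProduct.assoc ℂ C C C) ((TensorProduct.map Δ LinearMap.id) (Δ w))
        = (TensorProduct.map LinearMap.id Δ) (Δ w)
  counit_left : ∀ w ∈ Qc, counitL ε (Δ w) = w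
  counit_right : ∀ w ∈ Qc, counitR ε (Δ w) = w
  eps_weak : ∀ w ∈ Qc, ∀ w' ∈ Qc, ∀ w'' ∈ Qc,
      ε (w * w' * w'') =
        pairT (ε ∘ₗ LinearMap.mulLeft ℂ w) (ε ∘ₗ LinearMap.mulRight ℂ w'') (Δ w')
  eps_weak' : ∀ w ∈ Qc, ∀ w' ∈ Qc, ∀ w'' ∈ Qc,
      ε (w * w' * w'') =
        pairT (ε ∘ₗ LinearMap.mulRight ℂ w'') (ε ∘ₗ LinearMap.mulLeft ℂ w) (Δ w')
  delta_one_left :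
      (TensorProduct.assoc ℂ C C C).symm ((TensorProduct.map LinearMap.id Δ) (Δ 1))
        = ((Δ 1) ⊗ₜ[ℂ] (1 : C)) *
            ((TensorProduct.assoc ℂ C C C).symm ((1 : C) ⊗ₜ[ℂ] (Δ 1)))
  delta_one_right :
      (TensorProduct.assoc ℂ C C C).symm ((TensorProduct.map LinearMap.id Δ) (Δ 1))
        = ((TensorProduct.assoc ℂ C C C).symm ((1 : C) ⊗ₜ[ℂ] (Δ 1))) *
            ((Δ 1) ⊗ₜ[ℂ] (1 : C))
  antipode_left : ∀ w ∈ Qc,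
      LinearMap.mul' ℂ C ((TensorProduct.map LinearMap.id S) (Δ w)) = ctarget ε w (Δ 1)
  antipode_right : ∀ w ∈ Qc,
      LinearMap.mul' ℂ C ((TensorProduct.map S LinearMap.id) (Δ w)) = csource ε w (Δ 1)
  antipode_mid : ∀ w ∈ Qc,
      LinearMap.mul' ℂ C
        ((TensorProduct.map (LinearMap.mul' ℂ C ∘ₗ TensorProduct.map S LinearMap.id) S)
          ((TensorProduct.map Δ LinearMap.id) (Δ w))) = S w

/-- A left action of a weak C*-Hopf algebra `(Hc, Δ, ε, S, dag)` (realized inside the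
ambient algebra `C`) on the C*-subalgebra `Ac`, given as a bilinear map `act`. -/
structure IsWeakHopfActionOn {C : Type*} [CStarAlgebra C]
    (Hc : Submodule ℂ C) (Ac : StarSubalgebra ℂ C)
    (Δ : C →ₗ[ℂ] C ⊗[ℂ] C) (ε : C →ₗ[ℂ] ℂ) (S : C →ₗ[ℂ] C) (dag : C → C)
    (act : C →ₗ[ℂ] C →ₗ[ℂ] C) : Prop where
  act_mem : ∀ y ∈ Hc, ∀ a ∈ Ac, act y a ∈ Ac
  one_act : ∀ a ∈ Ac, act 1 a = a
  mul_act : ∀ y ∈ Hc, ∀ y' ∈ Hc, ∀ a ∈ Ac, act (y * y') a = act y (act y' a)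
  leibniz : ∀ y ∈ Hc, ∀ a ∈ Ac, ∀ a' ∈ Ac,
      act y (a * a') =
        LinearMap.mul' ℂ C ((TensorProduct.map (act.flip a) (act.flip a')) (Δ y))
  star_act : ∀ y ∈ Hc, ∀ a ∈ Ac, star (act y a) = act (dag (S y)) (star a)
  unit_act : ∀ y ∈ Hc, act y 1 = act (ctarget ε y (Δ 1)) 1
  unit_act_zero : ∀ y ∈ Hc, (act y 1 = 0 ↔ ctarget ε y (Δ 1) = 0)
/-- The conjugate-linear involution `w ↦ gi (star w) g` of `C` (for `gi = g⁻¹` this is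
the involution `w† = g⁻¹ w* g`). -/
def conjStar {C : Type*} [CStarAlgebra C] (g gi : C) : C →ₛₗ[starRingEnd ℂ] C where
  toFun w := gi * star w * g
  map_add' w w' := by rw [star_add, mul_add, add_mul]
  map_smul' c w := by
    simp only [star_smul, mul_smul_comm, smul_mul_assoc, starRingEnd_apply]

/-- The map `(x, a) ↦ x₍₁₎ a S(x₍₂₎)`, as a bilinear map, built from a comultiplication
`Δ` and an antipode `S`. -/
def hopfAct {C : Type*} [CStarAlgebra C] (Δ : C →ₗ[ℂ] C ⊗[ℂ] C) (S : C →ₗ[ℂ] C) :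
    C →ₗ[ℂ] C →ₗ[ℂ] C :=
  LinearMap.mk₂ ℂ
    (fun x a =>
      LinearMap.mul' ℂ C ((TensorProduct.map ((LinearMap.mul ℂ C).flip a) S) (Δ x)))
    (fun x x' a => by simp)
    (fun c x a => by simp)
    (fun x a a' => by simp [TensorProduct.map_add_left])
    (fun c x a => by simp [TensorProduct.map_smul_left])

namespace JonesTower

variable {C : Type*} [CStarAlgebra C]

/-- The action `w ▷ x = τ⁻¹ E₂(w x e₂)` of `Q = A' ∩ A₂` on `A₁`, as a bilinear map. -/
def qact (T : JonesTower C) : C →ₗ[ℂ] C →ₗ[ℂ] C :=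
  LinearMap.mk₂ ℂ (fun w x => (T.τ : ℂ)⁻¹ • T.E2.map (w * x * T.e2))
    (fun w w' x => by rw [add_mul, add_mul, map_add, smul_add])
    (fun c w x => by rw [smul_mul_assoc, smul_mul_assoc, map_smul, smul_comm])
    (fun w x x' => by rw [mul_add, add_mul, map_add, smul_add])
    (fun c w x => by rw [mul_smul_comm, smul_mul_assoc, map_smul, smul_comm])

/-- The weak C*-Hopf algebra structure `(Δ_P, ε_P, S_P)` on `P = B' ∩ A₁` which is dual,
via the Nikshych–Vainerman pairing, to the deformed weak C*-Hopf algebra structure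
`(Q, Δ̃, ε̃, S̃)`:  the multiplication of `P` is dual to `Δ̃`, the comultiplication of `P`
is dual to the multiplication of `Q`, the counit of `P` is evaluation against `1 ∈ Q`,
the unit of `P` pairs as `ε̃`, and the antipode of `P` is dual to `S̃`. -/
structure DualData (T : JonesTower C) (D : T.NVData) where
  ΔP : C →ₗ[ℂ] C ⊗[ℂ] C
  εP : C →ₗ[ℂ] ℂ
  SP : C →ₗ[ℂ] C
  ΔP_mem : ∀ x ∈ T.P, ΔP x ∈ T.PP
  SP_mem : ∀ x ∈ T.P, SP x ∈ T.P
  mul_dual : ∀ x ∈ T.P, ∀ x' ∈ T.P, ∀ w ∈ T.Q,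
      T.pairNV (x * x') w = pairT (T.pairL x) (T.pairL x') (tΔ D w)
  ΔP_dual : ∀ x ∈ T.P, ∀ w ∈ T.Q, ∀ w' ∈ T.Q,
      pairT (T.pairR w) (T.pairR w') (ΔP x) = T.pairNV x (w * w')
  εP_dual : ∀ x ∈ T.P, εP x = T.pairNV x 1
  one_dual : ∀ w ∈ T.Q, T.pairNV 1 w = tε D w
  SP_dual : ∀ x ∈ T.P, ∀ w ∈ T.Q, T.pairNV (SP x) w = T.pairNV x (tS D w)

end JonesTower

section AuxStatement8

variable {C : Type*} [CStarAlgebra C]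

private lemma aux_sqrt8 (S : StarSubalgebra ℂ C) (hS : IsClosed (S : Set C)) {h : C} (hh : h ∈ S)
    (hsa : star h = h) : ∃ v ∈ S, star v * v = ((‖h‖ : ℝ) : ℂ) • 1 + h := by
  haveI := hS
  letI : PartialOrder ↥S := CStarAlgebra.spectralOrder _
  haveI : StarOrderedRing ↥S := CStarAlgebra.spectralOrderedRing _
  set a : ↥S := ⟨h, hh⟩ with ha
  have hsa' : IsSelfAdjoint a := Subtype.ext hsa
  have key : -(algebraMap ℝ ↥S ‖a‖) ≤ a := hsa'.neg_algebraMap_norm_le_self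
  have halg : algebraMap ℝ ↥S ‖a‖ = ((‖a‖ : ℝ) : ℂ) • (1 : ↥S) := by
    rw [IsScalarTower.algebraMap_apply ℝ ℂ ↥S, Algebra.algebraMap_eq_smul_one]
    norm_num
  set b : ↥S := ((‖a‖ : ℝ) : ℂ) • (1 : ↥S) + a with hbdef
  have hb : (0 : ↥S) ≤ b := by
    have h2 : (0 : ↥S) ≤ a + algebraMap ℝ ↥S ‖a‖ := neg_le_iff_add_nonneg.mp key
    rw [hbdef, ← halg, add_comm]; exact h2
  set v := CFC.sqrt b with hv
  have hvnn : (0 : ↥S) ≤ v := CFC.sqrt_nonneg b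
  have hvsa : star v = v := (IsSelfAdjoint.of_nonneg hvnn)
  have hsq : v * v = b := by
    have := CFC.sq_sqrt b hb
    rwa [pow_two] at this
  refine ⟨(v : C), v.2, ?_⟩
  have h3 : ((star v * v : ↥S) : C) = ((b : ↥S) : C) := by rw [hvsa, hsq]
  simpa [ha, hbdef] using h3

private lemma aux_bdd8 (S : StarSubalgebra ℂ C) (hS : IsClosed (S : Set C)) (E : C →ₗ[ℂ] C)
    (hone : E 1 = 1)
    (hpos : ∀ x ∈ S, ∃ y, E (star x * x) = star y * y) :
    ∃ K : ℝ, 0 ≤ K ∧ ∀ w ∈ S, ‖E w‖ ≤ K * ‖w‖ := by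
  letI : PartialOrder C := CStarAlgebra.spectralOrder _
  haveI : StarOrderedRing C := CStarAlgebra.spectralOrderedRing _
  set M : ℝ := ‖(1 : C)‖ with hM
  have hM0 : 0 ≤ M := norm_nonneg _
  have sa : ∀ h ∈ S, star h = h → ‖E h‖ ≤ 3 * M * ‖h‖ := by
    intro h hh hsa
    obtain ⟨v, hv, hveq⟩ := aux_sqrt8 S hS hh hsa
    obtain ⟨v', hv', hveq'⟩ := aux_sqrt8 S hS (neg_mem hh) (by rw [star_neg, hsa])
    rw [norm_neg] at hveq'
    set p : C := ((‖h‖ : ℝ) : ℂ) • 1 + E h with hp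
    set q : C := ((‖h‖ : ℝ) : ℂ) • 1 - E h with hq
    obtain ⟨y, hy⟩ := hpos v hv
    obtain ⟨y', hy'⟩ := hpos v' hv'
    have hpE : p = E (star v * v) := by
      rw [hveq, map_add, map_smul, hone]
    have hqE : q = E (star v' * v') := by
      rw [hveq', map_add, map_smul, hone, map_neg, hq, sub_eq_add_neg]
    have hp0 : (0 : C) ≤ p := by rw [hpE, hy]; exact star_mul_self_nonneg y
    have hq0 : (0 : C) ≤ q := by rw [hqE, hy']; exact star_mul_self_nonneg y'
    have hpq : p + q = ((2 * ‖h‖ : ℝ) : ℂ) • 1 := by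
      have h2 : ((2 * ‖h‖ : ℝ) : ℂ) = (2 : ℂ) * ((‖h‖ : ℝ) : ℂ) := by push_cast; ring
      rw [hp, hq, h2, mul_smul, two_smul]
      abel
    have hple : p ≤ ((2 * ‖h‖ : ℝ) : ℂ) • 1 := by
      rw [← hpq]; exact le_add_of_nonneg_right hq0
    have hpnorm : ‖p‖ ≤ 2 * ‖h‖ * M := by
      have := CStarAlgebra.norm_le_norm_of_nonneg_of_le hp0 hple
      calc ‖p‖ ≤ ‖((2 * ‖h‖ : ℝ) : ℂ) • (1 : C)‖ := this
        _ = ‖((2 * ‖h‖ : ℝ) : ℂ)‖ * M := norm_smul _ _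
        _ ≤ 2 * ‖h‖ * M := by
            rw [Complex.norm_real, Real.norm_eq_abs, abs_of_nonneg (by positivity)]
    have hEh : E h = p - ((‖h‖ : ℝ) : ℂ) • 1 := by rw [hp]; abel
    rw [hEh]
    calc ‖p - ((‖h‖ : ℝ) : ℂ) • (1:C)‖ ≤ ‖p‖ + ‖((‖h‖ : ℝ) : ℂ) • (1:C)‖ := norm_sub_le _ _
      _ ≤ 2 * ‖h‖ * M + ‖h‖ * M := by
          refine add_le_add hpnorm ?_
          rw [norm_smul, Complex.norm_real, Real.norm_eq_abs, abs_of_nonneg (norm_nonneg h)]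
      _ = 3 * M * ‖h‖ := by ring
  refine ⟨6 * M, by positivity, ?_⟩
  intro w hw
  set c : ℂ := -(2⁻¹ : ℂ) * Complex.I with hc
  set h1 : C := w + star w with hh1
  set h2 : C := Complex.I • (w - star w) with hh2
  have h1sa : star h1 = h1 := by simp [hh1, add_comm]
  have h2sa : star h2 = h2 := by
    rw [hh2, star_smul, star_sub, star_star]
    have : star Complex.I = -Complex.I := by
      simpa using Complex.conj_I
    rw [this, neg_smul, ← smul_neg, neg_sub]
  have h1mem : h1 ∈ S := add_mem hw (star_mem hw)
  have h2mem : h2 ∈ S := SMulMemClass.smul_mem _ (sub_mem hw (star_mem hw))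
  have hw_eq : w = (2⁻¹ : ℂ) • h1 + c • h2 := by
    rw [hh1, hh2, smul_smul, hc]
    have hii : -(2⁻¹ : ℂ) * Complex.I * Complex.I = 2⁻¹ := by
      rw [mul_assoc, Complex.I_mul_I]; ring
    rw [hii, ← smul_add]
    have h2w : w + star w + (w - star w) = (2 : ℂ) • w := by rw [two_smul]; abel
    rw [h2w, smul_smul]
    norm_num
  have b1 := sa h1 h1mem h1sa
  have b2 := sa h2 h2mem h2sa
  have n1 : ‖h1‖ ≤ 2 * ‖w‖ := by
    calc ‖h1‖ ≤ ‖w‖ + ‖star w‖ := norm_add_le _ _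
      _ = 2 * ‖w‖ := by rw [norm_star]; ring
  have n2 : ‖h2‖ ≤ 2 * ‖w‖ := by
    rw [hh2, norm_smul, Complex.norm_I, one_mul]
    calc ‖w - star w‖ ≤ ‖w‖ + ‖star w‖ := norm_sub_le _ _
      _ = 2 * ‖w‖ := by rw [norm_star]; ring
  have hcn : ‖c‖ = 2⁻¹ := by
    rw [hc, norm_mul, norm_neg, Complex.norm_I, mul_one, norm_inv]
    norm_num
  have key : ‖E w‖ ≤ 2⁻¹ * ‖E h1‖ + 2⁻¹ * ‖E h2‖ := by
    conv_lhs => rw [hw_eq]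
    rw [map_add, map_smul, map_smul]
    calc ‖(2⁻¹ : ℂ) • E h1 + c • E h2‖ ≤ ‖(2⁻¹ : ℂ) • E h1‖ + ‖c • E h2‖ := norm_add_le _ _
      _ = 2⁻¹ * ‖E h1‖ + 2⁻¹ * ‖E h2‖ := by
          rw [norm_smul, norm_smul, hcn, norm_inv]
          norm_num
  nlinarith [mul_le_mul_of_nonneg_left n1 hM0, mul_le_mul_of_nonneg_left n2 hM0,
    norm_nonneg (E h1), norm_nonneg (E h2), norm_nonneg w]

namespace JonesTower

variable (T : JonesTower C)

private lemma aux_adjoin_pull :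
    ∀ z ∈ StarAlgebra.adjoin ℂ ((T.A1 : Set C) ∪ {T.e2}),
      (∀ m ∈ T.A1, ∃ a ∈ T.A1, z * (m * T.e2) = a * T.e2) ∧
      (∀ m ∈ T.A1, ∃ a ∈ T.A1, T.e2 * m * z = T.e2 * a) := by
  intro z hz
  induction hz using StarAlgebra.adjoin_induction with
  | mem x hx =>
    rcases hx with hx | hx
    · -- x ∈ A1
      refine ⟨fun m hm => ⟨x * m, mul_mem hx hm, by rw [mul_assoc]⟩,
        fun m hm => ⟨m * x, mul_mem hm hx, by rw [mul_assoc]⟩⟩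
    · -- x = e2
      rcases hx with rfl
      constructor
      · intro m hm
        refine ⟨T.E1.map m, T.hAA1 (T.E1.mem_of_mem m hm), ?_⟩
        rw [← mul_assoc]
        exact T.e2_jones m hm
      · intro m hm
        refine ⟨T.E1.map m, T.hAA1 (T.E1.mem_of_mem m hm), ?_⟩
        rw [T.e2_jones m hm, T.e2_comm _ (T.E1.mem_of_mem m hm)]
  | algebraMap r =>
    constructor
    · intro m hm
      refine ⟨r • m, SMulMemClass.smul_mem r hm, ?_⟩
      rw [Algebra.algebraMap_eq_smul_one, smul_mul_assoc, one_mul, smul_mul_assoc]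
    · intro m hm
      refine ⟨r • m, SMulMemClass.smul_mem r hm, ?_⟩
      rw [Algebra.algebraMap_eq_smul_one, mul_smul_comm, mul_one, mul_smul_comm]
  | add x y hx hy ihx ihy =>
    constructor
    · intro m hm
      obtain ⟨a, haA, ha⟩ := ihx.1 m hm
      obtain ⟨b, hbA, hb⟩ := ihy.1 m hm
      exact ⟨a + b, add_mem haA hbA, by rw [add_mul, ha, hb, add_mul]⟩
    · intro m hm
      obtain ⟨a, haA, ha⟩ := ihx.2 m hm
      obtain ⟨b, hbA, hb⟩ := ihy.2 m hm
      exact ⟨a + b, add_mem haA hbA, by rw [mul_add, ha, hb, mul_add]⟩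
  | mul x y hx hy ihx ihy =>
    constructor
    · intro m hm
      obtain ⟨a, haA, ha⟩ := ihy.1 m hm
      obtain ⟨b, hbA, hb⟩ := ihx.1 a haA
      exact ⟨b, hbA, by rw [mul_assoc, ha, hb]⟩
    · intro m hm
      obtain ⟨a, haA, ha⟩ := ihx.2 m hm
      obtain ⟨b, hbA, hb⟩ := ihy.2 a haA
      refine ⟨b, hbA, ?_⟩
      rw [← mul_assoc, ha, hb]
  | star x hx ihx =>
    constructor
    · intro m hm
      obtain ⟨a, haA, ha⟩ := ihx.2 (star m) (star_mem hm)
      refine ⟨star a, star_mem haA, ?_⟩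
      have h := congrArg star ha
      simp only [star_mul, star_star, T.e2_star] at h
      rw [← mul_assoc] at h ⊢
      exact h
    · intro m hm
      obtain ⟨a, haA, ha⟩ := ihx.1 (star m) (star_mem hm)
      refine ⟨star a, star_mem haA, ?_⟩
      have h := congrArg star ha
      simp only [star_mul, star_star, T.e2_star] at h
      exact h

private lemma aux_A2_closed : IsClosed ((T.A2 : Set C)) := by
  rw [T.gen2]
  exact StarSubalgebra.isClosed_topologicalClosure _

private lemma aux_pulldown :
    ∀ x ∈ T.A2, T.E2.map (x * T.e2) * T.e2 = ((T.τ : ℝ) : ℂ) • (x * T.e2) := by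
  obtain ⟨K, hK0, hK⟩ := aux_bdd8 T.A2 T.aux_A2_closed T.E2.map
    (T.E2.fixes 1 (one_mem _)) (fun x hx => by
      obtain ⟨y, _, hy⟩ := T.E2.positive x hx
      exact ⟨y, hy⟩)
  intro x hx
  set S := StarAlgebra.adjoin ℂ ((T.A1 : Set C) ∪ {T.e2}) with hSdef
  have hle : S ≤ T.A2 := by
    rw [T.gen2]
    exact StarSubalgebra.le_topologicalClosure _
  have hcoe : (T.A2 : Set C) = closure (S : Set C) := by
    rw [T.gen2]
    exact StarSubalgebra.topologicalClosure_coe _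
  have hxcl : x ∈ closure (S : Set C) := by rw [← hcoe]; exact hx
  obtain ⟨u, hu1, hu2⟩ := mem_closure_iff_seq_limit.mp hxcl
  set f : C → C := fun z => T.E2.map (z * T.e2) * T.e2 - ((T.τ : ℝ) : ℂ) • (z * T.e2)
    with hf
  have hf0 : ∀ z ∈ S, f z = 0 := by
    intro z hz
    obtain ⟨a, haA, ha⟩ := ((T.aux_adjoin_pull z hz).1 1 (one_mem _))
    rw [one_mul] at ha
    have hEa : T.E2.map (a * T.e2) = ((T.τ : ℝ) : ℂ) • a := by
      have hb := T.E2.bimodule a haA 1 (one_mem _) T.e2 T.e2_mem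
      rw [mul_one, mul_one] at hb
      rw [hb, T.E2_e2, mul_smul_comm, mul_one]
    have : f z = T.E2.map (a * T.e2) * T.e2 - ((T.τ : ℝ) : ℂ) • (a * T.e2) := by
      rw [hf]; dsimp only; rw [ha]
    rw [this, hEa, smul_mul_assoc, sub_self]
  set K' : ℝ := (K * ‖T.e2‖ + T.τ) * ‖T.e2‖ with hK'
  have hbd : ∀ z ∈ T.A2, ‖f z‖ ≤ K' * ‖z‖ := by
    intro z hz
    have hze : z * T.e2 ∈ T.A2 := mul_mem hz T.e2_mem
    have ht : ‖z * T.e2‖ ≤ ‖z‖ * ‖T.e2‖ := norm_mul_le _ _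
    have h1 : ‖T.E2.map (z * T.e2) * T.e2‖ ≤ K * ‖z * T.e2‖ * ‖T.e2‖ := by
      calc ‖T.E2.map (z * T.e2) * T.e2‖ ≤ ‖T.E2.map (z * T.e2)‖ * ‖T.e2‖ := norm_mul_le _ _
        _ ≤ K * ‖z * T.e2‖ * ‖T.e2‖ :=
            mul_le_mul_of_nonneg_right (hK _ hze) (norm_nonneg _)
    have h2 : ‖((T.τ : ℝ) : ℂ) • (z * T.e2)‖ = T.τ * ‖z * T.e2‖ := by
      rw [norm_smul, Complex.norm_real, Real.norm_eq_abs, abs_of_nonneg T.τ_pos.le]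
    have h3 : ‖f z‖ ≤ ‖T.E2.map (z * T.e2) * T.e2‖ + ‖((T.τ : ℝ) : ℂ) • (z * T.e2)‖ :=
      norm_sub_le _ _
    have he2 : (0:ℝ) ≤ ‖T.e2‖ := norm_nonneg _
    have hz0 : (0:ℝ) ≤ ‖z‖ := norm_nonneg _
    nlinarith [mul_le_mul_of_nonneg_right ht he2, mul_le_mul_of_nonneg_left ht T.τ_pos.le,
      mul_le_mul_of_nonneg_right (mul_le_mul_of_nonneg_left ht hK0) he2,
      norm_nonneg (z * T.e2)]
  have flin : ∀ z1 z2 : C, f (z1 - z2) = f z1 - f z2 := by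
    intro z1 z2
    simp only [hf]
    rw [sub_mul, map_sub, sub_mul, smul_sub]
    abel
  have hfx : ∀ n, ‖f x‖ ≤ K' * ‖u n - x‖ := by
    intro n
    have h1 : f x = f x - f (u n) := by rw [hf0 _ (hu1 n), sub_zero]
    have h2 : f x - f (u n) = -(f (u n - x)) := by rw [flin]; abel
    rw [h1, h2, norm_neg]
    exact hbd _ (sub_mem (hle (hu1 n)) hx)
  have hK'0 : (0:ℝ) ≤ K' :=
    mul_nonneg (add_nonneg (mul_nonneg hK0 (norm_nonneg _)) T.τ_pos.le) (norm_nonneg _)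
  have hlim0 : Filter.Tendsto (fun n => ‖u n - x‖) Filter.atTop (nhds 0) :=
    tendsto_iff_norm_sub_tendsto_zero.mp hu2
  have hlim : Filter.Tendsto (fun n => K' * ‖u n - x‖) Filter.atTop (nhds 0) := by
    simpa using hlim0.const_mul K'
  have hfx0 : ‖f x‖ ≤ 0 := ge_of_tendsto' hlim hfx
  have : f x = 0 := norm_le_zero_iff.mp hfx0
  have := sub_eq_zero.mp this
  exact this

end JonesTower

end AuxStatement8

/-- Let `B ⊂ A` be an inclusion of simple unital C*-algebras with a
conditional expectation of index-finite type.  Then `(B' ∩ A₂) e₂ = (B' ∩ A₁) e₂` and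
`(B' ∩ A₂) e₁ = (A' ∩ A₂) e₁`. -/
theorem statement_8 {C : Type*} [CStarAlgebra C] (T : JonesTower C) :
    (fun x => x * T.e2) '' (relativeCommutant T.B T.A2 : Set C)
        = (fun x => x * T.e2) '' (T.P : Set C)
    ∧ (fun x => x * T.e1) '' (relativeCommutant T.B T.A2 : Set C)
        = (fun x => x * T.e1) '' (T.Q : Set C) := by
  have hτ : ((T.τ : ℝ) : ℂ) ≠ 0 := by
    exact_mod_cast T.τ_pos.ne'
  constructor
  · -- Part 1 : (B' ∩ A₂) e₂ = (B' ∩ A₁) e₂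
    apply Set.Subset.antisymm
    · rintro z ⟨x, hx, rfl⟩
      obtain ⟨hx2, hxc⟩ := hx
      set y := ((T.τ : ℝ) : ℂ)⁻¹ • T.E2.map (x * T.e2) with hy
      have hxe2 : x * T.e2 ∈ T.A2 := mul_mem hx2 T.e2_mem
      have hyA1 : T.E2.map (x * T.e2) ∈ T.A1 := T.E2.mem_of_mem _ hxe2
      have hymem : y ∈ T.P := by
        refine ⟨SMulMemClass.smul_mem _ hyA1, fun b hb => ?_⟩
        have hbA : b ∈ T.A := T.hBA hb
        have hbA1 : b ∈ T.A1 := T.hAA1 hbA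
        have h1 : b * (x * T.e2) = (x * T.e2) * b := by
          rw [← mul_assoc, hxc b hb, mul_assoc, ← T.e2_comm b hbA, ← mul_assoc]
        have h2 : T.E2.map (b * (x * T.e2)) = b * T.E2.map (x * T.e2) := by
          have h := T.E2.bimodule b hbA1 1 (one_mem _) (x * T.e2) hxe2
          rwa [mul_one, mul_one] at h
        have h3 : T.E2.map ((x * T.e2) * b) = T.E2.map (x * T.e2) * b := by
          have h := T.E2.bimodule 1 (one_mem _) b hbA1 (x * T.e2) hxe2
          rwa [one_mul, one_mul] at h
        calc b * y = ((T.τ : ℝ) : ℂ)⁻¹ • (b * T.E2.map (x * T.e2)) := mul_smul_comm _ _ _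
          _ = ((T.τ : ℝ) : ℂ)⁻¹ • (T.E2.map (x * T.e2) * b) := by rw [← h2, h1, h3]
          _ = y * b := (smul_mul_assoc _ _ _).symm
      refine ⟨y, hymem, ?_⟩
      show y * T.e2 = x * T.e2
      rw [hy, smul_mul_assoc, T.aux_pulldown x hx2, smul_smul, inv_mul_cancel₀ hτ,
        one_smul]
    · rintro z ⟨x, hx, rfl⟩
      obtain ⟨hx1, hxc⟩ := hx
      exact ⟨x, ⟨T.hA1A2 hx1, hxc⟩, rfl⟩
  · -- Part 2 : (B' ∩ A₂) e₁ = (A' ∩ A₂) e₁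
    apply Set.Subset.antisymm
    · rintro z ⟨x, hx, rfl⟩
      obtain ⟨hx2, hxc⟩ := hx
      have hlam : ∀ i, T.lam i ∈ T.A := fun i => T.lam_qb.mem i
      have hAA2 : ∀ {c : C}, c ∈ T.A → c ∈ T.A2 := fun hc => T.hA1A2 (T.hAA1 hc)
      -- helpers
      have jones1 : ∀ c ∈ T.A, ∀ z : C,
          T.e1 * (c * (T.e1 * z)) = T.E0.map c * (T.e1 * z) := by
        intro c hc z
        have h := T.e1_jones c hc
        calc T.e1 * (c * (T.e1 * z)) = (T.e1 * c * T.e1) * z := by simp only [mul_assoc]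
          _ = (T.E0.map c * T.e1) * z := by rw [h]
          _ = T.E0.map c * (T.e1 * z) := by simp only [mul_assoc]
      have jones1' : ∀ c ∈ T.A, T.e1 * (c * T.e1) = T.E0.map c * T.e1 := by
        intro c hc
        have h := T.e1_jones c hc
        rwa [mul_assoc] at h
      have swapx : ∀ b ∈ T.B, ∀ z : C, x * (b * z) = b * (x * z) := by
        intro b hb z
        calc x * (b * z) = (x * b) * z := (mul_assoc _ _ _).symm
          _ = (b * x) * z := by rw [← hxc b hb]
          _ = b * (x * z) := mul_assoc _ _ _
      have e1b : ∀ b ∈ T.B, ∀ z : C, T.e1 * (b * z) = b * (T.e1 * z) := by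
        intro b hb z
        rw [← mul_assoc, T.e1_comm b hb, mul_assoc]
      set w := ∑ i, T.lam i * x * T.e1 * star (T.lam i) with hw
      have hwA2 : w ∈ T.A2 := by
        refine sum_mem fun i _ => ?_
        exact mul_mem (mul_mem (mul_mem (hAA2 (hlam i)) hx2) (T.hA1A2 T.e1_mem))
          (hAA2 (star_mem (hlam i)))
      have hwe1 : w * T.e1 = x * T.e1 := by
        rw [hw, Finset.sum_mul]
        have hcongr : ∀ i ∈ Finset.univ,
            (T.lam i * x * T.e1 * star (T.lam i)) * T.e1
              = (T.lam i * T.E0.map (star (T.lam i) * 1)) * (x * T.e1) := by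
          intro i _
          have hsl : star (T.lam i) ∈ T.A := star_mem (hlam i)
          calc (T.lam i * x * T.e1 * star (T.lam i)) * T.e1
              = T.lam i * (x * (T.e1 * (star (T.lam i) * T.e1))) := by
                simp only [mul_assoc]
            _ = T.lam i * (x * (T.E0.map (star (T.lam i)) * T.e1)) := by
                rw [jones1' _ hsl]
            _ = T.lam i * (T.E0.map (star (T.lam i)) * (x * T.e1)) := by
                rw [swapx _ (T.E0.mem_of_mem _ hsl)]
            _ = (T.lam i * T.E0.map (star (T.lam i) * 1)) * (x * T.e1) := by
                rw [mul_one, mul_assoc]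
        rw [Finset.sum_congr rfl hcongr, ← Finset.sum_mul, T.lam_qb.left 1 (one_mem T.A),
          one_mul]
      have hcomm : ∀ a ∈ T.A, a * w = w * a := by
        intro a ha
        have lhs : a * w = ∑ i, ∑ j, T.lam j * (x * (T.e1 *
            ((star (T.lam j) * (a * T.lam i)) * (T.e1 * star (T.lam i))))) := by
          rw [hw, Finset.mul_sum]
          refine Finset.sum_congr rfl fun i _ => ?_
          have hal : a * T.lam i ∈ T.A := mul_mem ha (hlam i)
          have hexp := T.lam_qb.left (a * T.lam i) hal
          calc a * (T.lam i * x * T.e1 * star (T.lam i))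
              = (a * T.lam i) * (x * (T.e1 * star (T.lam i))) := by simp only [mul_assoc]
            _ = (∑ j, T.lam j * T.E0.map (star (T.lam j) * (a * T.lam i)))
                  * (x * (T.e1 * star (T.lam i))) := by rw [hexp]
            _ = ∑ j, (T.lam j * T.E0.map (star (T.lam j) * (a * T.lam i)))
                  * (x * (T.e1 * star (T.lam i))) := Finset.sum_mul _ _ _
            _ = ∑ j, T.lam j * (x * (T.e1 *
                  ((star (T.lam j) * (a * T.lam i)) * (T.e1 * star (T.lam i))))) := by
                refine Finset.sum_congr rfl fun j _ => ?_
                have hcA : star (T.lam j) * (a * T.lam i) ∈ T.A :=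
                  mul_mem (star_mem (hlam j)) hal
                rw [mul_assoc, ← swapx _ (T.E0.mem_of_mem _ hcA), ← jones1 _ hcA]
        have rhs : w * a = ∑ j, ∑ i, T.lam j * (x * (T.e1 *
            ((star (T.lam j) * (a * T.lam i)) * (T.e1 * star (T.lam i))))) := by
          rw [hw, Finset.sum_mul]
          refine Finset.sum_congr rfl fun j _ => ?_
          have hsa : star (T.lam j) * a ∈ T.A := mul_mem (star_mem (hlam j)) ha
          have hexp := T.lam_qb.right (star (T.lam j) * a) hsa
          calc (T.lam j * x * T.e1 * star (T.lam j)) * a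
              = T.lam j * (x * (T.e1 * (star (T.lam j) * a))) := by simp only [mul_assoc]
            _ = T.lam j * (x * (T.e1 * (∑ i, T.E0.map ((star (T.lam j) * a) * T.lam i)
                  * star (T.lam i)))) := by
                conv_rhs => rw [hexp]
            _ = ∑ i, T.lam j * (x * (T.e1 * (T.E0.map ((star (T.lam j) * a) * T.lam i)
                  * star (T.lam i)))) := by
                rw [Finset.mul_sum, Finset.mul_sum, Finset.mul_sum]
            _ = ∑ i, T.lam j * (x * (T.e1 *
                  ((star (T.lam j) * (a * T.lam i)) * (T.e1 * star (T.lam i))))) := by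
                refine Finset.sum_congr rfl fun i _ => ?_
                have hdA : (star (T.lam j) * a) * T.lam i ∈ T.A := mul_mem hsa (hlam i)
                rw [e1b _ (T.E0.mem_of_mem _ hdA), ← jones1 _ hdA,
                  mul_assoc (star (T.lam j)) a (T.lam i)]
        rw [lhs, rhs, Finset.sum_comm]
      exact ⟨w, ⟨hwA2, hcomm⟩, hwe1⟩
    · rintro z ⟨x, hx, rfl⟩
      obtain ⟨hx2, hxc⟩ := hx
      exact ⟨x, ⟨hx2, fun b hb => hxc b (T.hBA hb)⟩, rfl⟩
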